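/- Let M be a detailed balanced Markov process on a finite set N with rate constants r : E → (0,∞) and equilibrium populations q : N → (0,∞), and define the extended dissipation functional C(p) = (1/4) ∑_{e ∈ E} r_e q_{s(e)} (p_{s(e)}/q_{s(e)} − p_{t(e)}/q_{t(e)})². If a time-dependent population p(t) obeys the master equation dp_n/dt = ∑_j H_{nj} p_j at a state n, then dp_n/dt = −q_n ∂C/∂p_n. -/

import Mathlib

open Finset

/-- For a detailed balanced Markov process, if a time-dependent population
obeys the master equation at a state n, then dp_n/dt = −q_n ∂C/∂p_n, where C
is the extended dissipation functional. -/
theorem master_equation_dissipation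
    {N E : Type} [Fintype N] [Fintype E] [DecidableEq N]
    (s t : E → N) (r : E → ℝ) (hr : ∀ e, 0 < r e)
    (q : N → ℝ) (hq : ∀ i, 0 < q i)
    (h_db : ∀ i j : N,
      ∑ e ∈ univ.filter (fun e => s e = i ∧ t e = j), r e * q i
        = ∑ e ∈ univ.filter (fun e => s e = j ∧ t e = i), r e * q j)
    (H : Matrix N N ℝ)
    (hH_off : ∀ i j, i ≠ j → H i j = ∑ e ∈ univ.filter (fun e => s e = j ∧ t e = i), r e)
    (hH_diag : ∀ i, H i i = -∑ e ∈ univ.filter (fun e => s e = i ∧ t e ≠ i), r e)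
    (C : (N → ℝ) → ℝ)
    (hC : ∀ p : N → ℝ,
      C p = (1/4) * ∑ e, r e * q (s e) * (p (s e) / q (s e) - p (t e) / q (t e))^2)
    (p : ℝ → N → ℝ) (n : N) (τ : ℝ)
    (h_master : HasDerivAt (fun u => p u n) (∑ j, H n j * p τ j) τ) :
    deriv (fun u => p u n) τ = -(q n * fderiv ℝ C (p τ) (Pi.single n 1)) := by
  classical
  set pp : N → ℝ := p τ with hppdef
  -- the "value" of the inner affine combination at pp
  set u : E → ℝ := fun e => pp (s e) / q (s e) - pp (t e) / q (t e) with hu_def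
  -- linear map pieces
  have hproj : ∀ i : N, HasFDerivAt (fun y : N → ℝ => y i / q i)
      ((q i)⁻¹ • (ContinuousLinearMap.proj i : (N → ℝ) →L[ℝ] ℝ)) pp := fun i => by
    have := ((ContinuousLinearMap.proj i : (N → ℝ) →L[ℝ] ℝ).hasFDerivAt (x := pp)).mul_const (q i)⁻¹
    simp only [div_eq_mul_inv]; exact this
  set L : E → ((N → ℝ) →L[ℝ] ℝ) := fun e =>
    (q (s e))⁻¹ • (ContinuousLinearMap.proj (s e) : (N → ℝ) →L[ℝ] ℝ)
      - (q (t e))⁻¹ • (ContinuousLinearMap.proj (t e) : (N → ℝ) →L[ℝ] ℝ) with hL_def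
  have hu : ∀ e, HasFDerivAt (fun y : N → ℝ => y (s e) / q (s e) - y (t e) / q (t e)) (L e) pp :=
    fun e => (hproj (s e)).sub (hproj (t e))
  have hterm : ∀ e, HasFDerivAt
      (fun y : N → ℝ => r e * q (s e) * (y (s e) / q (s e) - y (t e) / q (t e))^2)
      ((r e * q (s e)) • (u e • L e + u e • L e)) pp := fun e => by
    have := ((hu e).mul (hu e)).const_mul (r e * q (s e))
    simp only [pow_two]; exact this
  have hCd : HasFDerivAt C
      ((1/4 : ℝ) • ∑ e, (r e * q (s e)) • (u e • L e + u e • L e)) pp := by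
    have hCfun : C = fun y : N → ℝ =>
        (1/4) * ∑ e, r e * q (s e) * (y (s e) / q (s e) - y (t e) / q (t e))^2 := funext hC
    rw [hCfun]
    exact (HasFDerivAt.fun_sum (fun e _ => hterm e)).const_mul (1/4 : ℝ)
  have hfd : fderiv ℝ C pp (Pi.single n 1)
      = (1/2) * ∑ e, r e * q (s e) * u e *
          ((if s e = n then (q (s e))⁻¹ else 0) - (if t e = n then (q (t e))⁻¹ else 0)) := by
    rw [hCd.fderiv]
    simp only [ContinuousLinearMap.smul_apply, ContinuousLinearMap.sum_apply,
      ContinuousLinearMap.add_apply, ContinuousLinearMap.sub_apply,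
      ContinuousLinearMap.proj_apply, Pi.single_apply, smul_eq_mul, hL_def,
      mul_ite, mul_one, mul_zero]
    rw [Finset.mul_sum, Finset.mul_sum]
    exact Finset.sum_congr rfl fun e _ => by ring
  have hqn : ∀ i : N, q i ≠ 0 := fun i => (hq i).ne'
  -- key consequence of detailed balance
  have key : ∀ f : N → ℝ,
      ∑ e ∈ univ.filter (fun e => s e = n), r e * q n * f (t e)
        = ∑ e ∈ univ.filter (fun e => t e = n), r e * q (s e) * f (s e) := by
    intro f
    rw [← Finset.sum_fiberwise (univ.filter (fun e => s e = n)) t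
          (fun e => r e * q n * f (t e)),
        ← Finset.sum_fiberwise (univ.filter (fun e => t e = n)) s
          (fun e => r e * q (s e) * f (s e))]
    refine Finset.sum_congr rfl fun j _ => ?_
    have hL1 : (univ.filter (fun e => s e = n)).filter (fun e => t e = j)
        = univ.filter (fun e => s e = n ∧ t e = j) := by rw [Finset.filter_filter]
    have hR1 : (univ.filter (fun e => t e = n)).filter (fun e => s e = j)
        = univ.filter (fun e => s e = j ∧ t e = n) := by
      rw [Finset.filter_filter]
      ext e
      simp only [Finset.mem_filter, Finset.mem_univ, true_and]
      tauto
    rw [hL1, hR1]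
    calc ∑ e ∈ univ.filter (fun e => s e = n ∧ t e = j), r e * q n * f (t e)
        = ∑ e ∈ univ.filter (fun e => s e = n ∧ t e = j), r e * q n * f j :=
          Finset.sum_congr rfl fun e he => by rw [(Finset.mem_filter.mp he).2.2]
      _ = (∑ e ∈ univ.filter (fun e => s e = n ∧ t e = j), r e * q n) * f j := by
          rw [← Finset.sum_mul]
      _ = (∑ e ∈ univ.filter (fun e => s e = j ∧ t e = n), r e * q j) * f j := by
          rw [h_db n j]
      _ = ∑ e ∈ univ.filter (fun e => s e = j ∧ t e = n), r e * q j * f j := by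
          rw [Finset.sum_mul]
      _ = ∑ e ∈ univ.filter (fun e => s e = j ∧ t e = n), r e * q (s e) * f (s e) :=
          Finset.sum_congr rfl fun e he => by rw [(Finset.mem_filter.mp he).2.1]
  have keyx' : ∑ e ∈ univ.filter (fun e => s e = n), r e * q n * (pp (t e) / q (t e))
      = ∑ e ∈ univ.filter (fun e => t e = n), r e * pp (s e) := by
    rw [key (fun j => pp j / q j)]
    exact Finset.sum_congr rfl fun e _ => by
      have := hqn (s e); field_simp
  have keyc : (∑ e ∈ univ.filter (fun e => s e = n), r e) * pp n
      = ∑ e ∈ univ.filter (fun e => t e = n), r e * q (s e) * (pp n / q n) := by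
    rw [← key (fun _ => pp n / q n), Finset.sum_mul]
    exact Finset.sum_congr rfl fun e _ => by
      have := hqn n; field_simp
  -- split the derivative-sum into source and target parts
  have hsplit : ∑ e, r e * q (s e) * u e *
        ((if s e = n then (q (s e))⁻¹ else 0) - (if t e = n then (q (t e))⁻¹ else 0))
      = (∑ e ∈ univ.filter (fun e => s e = n), r e * q (s e) * u e * (q (s e))⁻¹)
        - ∑ e ∈ univ.filter (fun e => t e = n), r e * q (s e) * u e * (q (t e))⁻¹ := by
    rw [Finset.sum_filter, Finset.sum_filter, ← Finset.sum_sub_distrib]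
    exact Finset.sum_congr rfl fun e _ => by
      by_cases hs : s e = n <;> by_cases ht : t e = n <;> simp [hs, ht] <;> ring
  have hS1' : q n * ∑ e ∈ univ.filter (fun e => s e = n), r e * q (s e) * u e * (q (s e))⁻¹
      = (∑ e ∈ univ.filter (fun e => s e = n), r e) * pp n
        - ∑ e ∈ univ.filter (fun e => t e = n), r e * pp (s e) := by
    rw [Finset.mul_sum]
    have step : ∀ e ∈ univ.filter (fun e => s e = n),
        q n * (r e * q (s e) * u e * (q (s e))⁻¹)
          = r e * pp n - r e * q n * (pp (t e) / q (t e)) := by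
      intro e he
      have hs := (Finset.mem_filter.mp he).2
      simp only [hu_def]
      rw [hs]
      have h1 := hqn n; have h2 := hqn (t e)
      field_simp
    rw [Finset.sum_congr rfl step, Finset.sum_sub_distrib, ← Finset.sum_mul, keyx']
  have hS2' : q n * ∑ e ∈ univ.filter (fun e => t e = n), r e * q (s e) * u e * (q (t e))⁻¹
      = (∑ e ∈ univ.filter (fun e => t e = n), r e * pp (s e))
        - (∑ e ∈ univ.filter (fun e => s e = n), r e) * pp n := by
    rw [Finset.mul_sum]
    have step : ∀ e ∈ univ.filter (fun e => t e = n),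
        q n * (r e * q (s e) * u e * (q (t e))⁻¹)
          = r e * pp (s e) - r e * q (s e) * (pp n / q n) := by
      intro e he
      have ht := (Finset.mem_filter.mp he).2
      simp only [hu_def]
      rw [ht]
      have h1 := hqn n; have h2 := hqn (s e)
      field_simp
    rw [Finset.sum_congr rfl step, Finset.sum_sub_distrib, ← keyc]
  -- master-equation side
  have hM : ∑ j, H n j * pp j
      = (∑ e ∈ univ.filter (fun e => t e = n), r e * pp (s e))
        - (∑ e ∈ univ.filter (fun e => s e = n), r e) * pp n := by
    have hfib : ∑ e ∈ univ.filter (fun e => t e = n), r e * pp (s e)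
        = ∑ j, (∑ e ∈ univ.filter (fun e => s e = j ∧ t e = n), r e) * pp j := by
      rw [← Finset.sum_fiberwise (univ.filter (fun e => t e = n)) s
            (fun e => r e * pp (s e))]
      refine Finset.sum_congr rfl fun j _ => ?_
      have h1 : (univ.filter (fun e => t e = n)).filter (fun e => s e = j)
          = univ.filter (fun e => s e = j ∧ t e = n) := by
        rw [Finset.filter_filter]
        ext e
        simp only [Finset.mem_filter, Finset.mem_univ, true_and]
        tauto
      rw [h1, Finset.sum_mul]
      exact Finset.sum_congr rfl fun e he => by rw [(Finset.mem_filter.mp he).2.1]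
    have hHj : ∀ j, H n j * pp j
        = (∑ e ∈ univ.filter (fun e => s e = j ∧ t e = n), r e) * pp j
          + (if j = n then
              (H n n - ∑ e ∈ univ.filter (fun e => s e = n ∧ t e = n), r e) * pp n else 0) := by
      intro j
      by_cases hj : j = n
      · subst hj
        simp only [if_pos]
        ring
      · rw [hH_off n j (Ne.symm hj)]
        simp [hj]
    have hdiag : H n n - ∑ e ∈ univ.filter (fun e => s e = n ∧ t e = n), r e
        = -(∑ e ∈ univ.filter (fun e => s e = n), r e) := by
      rw [hH_diag n]
      have hsp : ∑ e ∈ univ.filter (fun e => s e = n), r e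
          = (∑ e ∈ univ.filter (fun e => s e = n ∧ t e = n), r e)
            + ∑ e ∈ univ.filter (fun e => s e = n ∧ t e ≠ n), r e := by
        rw [← Finset.sum_filter_add_sum_filter_not (univ.filter (fun e => s e = n))
              (fun e => t e = n)]
        congr 1 <;> rw [Finset.filter_filter]
      rw [hsp]
      ring
    calc ∑ j, H n j * pp j
        = ∑ j, ((∑ e ∈ univ.filter (fun e => s e = j ∧ t e = n), r e) * pp j
            + (if j = n then
                (H n n - ∑ e ∈ univ.filter (fun e => s e = n ∧ t e = n), r e) * pp n else 0)) :=
          Finset.sum_congr rfl fun j _ => hHj j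
      _ = (∑ j, (∑ e ∈ univ.filter (fun e => s e = j ∧ t e = n), r e) * pp j)
            + (H n n - ∑ e ∈ univ.filter (fun e => s e = n ∧ t e = n), r e) * pp n := by
          rw [Finset.sum_add_distrib, Finset.sum_ite_eq' univ n]
          simp
      _ = (∑ e ∈ univ.filter (fun e => t e = n), r e * pp (s e))
            - (∑ e ∈ univ.filter (fun e => s e = n), r e) * pp n := by
          rw [← hfib, hdiag]
          ring
  rw [h_master.deriv, hfd, hsplit, hM]
  have hring : q n * ((1/2) *
      ((∑ e ∈ univ.filter (fun e => s e = n), r e * q (s e) * u e * (q (s e))⁻¹)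
        - ∑ e ∈ univ.filter (fun e => t e = n), r e * q (s e) * u e * (q (t e))⁻¹))
      = (1/2) * ((q n * ∑ e ∈ univ.filter (fun e => s e = n), r e * q (s e) * u e * (q (s e))⁻¹)
        - q n * ∑ e ∈ univ.filter (fun e => t e = n), r e * q (s e) * u e * (q (t e))⁻¹) := by
    ring
  rw [hring, hS1', hS2']
  ring
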